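/- Let q ≥ 5 be a prime power, n ≥ 2 an integer, and M = 𝔽_q^{n×n} ⊕ 𝔽_q^{n×n} (the case t = 2). Then there exists no perfect linear sum-rank code C in M whose minimum distance d satisfies ⌊(d−1)/2⌋ ≥ 6. -/

import Mathlib

set_option linter.unusedSectionVars false
set_option maxHeartbeats 1000000


open Matrix

/-- The sum-rank weight of a tuple of matrices. -/
noncomputable def sumRankW {F : Type} [Field F] {t n m : ℕ}
    (X : Fin t → Matrix (Fin n) (Fin m) F) : ℕ :=
  ∑ i, (X i).rank

/-- The number of tuples of matrices of sum-rank weight at most `r`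
(the volume of a sum-rank ball of radius `r`). -/
noncomputable def ballVol (F : Type) [Field F] [Fintype F] (t n m r : ℕ) : ℕ :=
  Nat.card {X : Fin t → Matrix (Fin n) (Fin m) F // sumRankW X ≤ r}

/-- `d` is the minimum sum-rank distance of the linear code `C`:
`d` is the least sum-rank weight of a nonzero codeword of `C`
(in particular `C` contains a nonzero element). -/
def IsMinDist {F : Type} [Field F] {t n : ℕ}
    (C : Submodule F (Fin t → Matrix (Fin n) (Fin n) F)) (d : ℕ) : Prop :=
  IsLeast {w | ∃ x ∈ C, x ≠ 0 ∧ sumRankW x = w} d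

/-- The linear code `C` with minimum distance `d` is perfect:
`|C| · V_{⌊(d-1)/2⌋} = |M|`. -/
def IsPerfect (F : Type) [Field F] [Fintype F] {t n : ℕ}
    (C : Submodule F (Fin t → Matrix (Fin n) (Fin n) F)) (d : ℕ) : Prop :=
  Nat.card C * ballVol F t n n ((d - 1) / 2) =
    Nat.card (Fin t → Matrix (Fin n) (Fin n) F)


section Helpers
variable {F : Type} [Field F] [Fintype F]
set_option linter.unusedSectionVars false
variable {F : Type} [Field F] [Fintype F]

lemma exists_fact {n : ℕ} (M : Matrix (Fin n) (Fin n) F) :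
    ∃ (A : Matrix (Fin n) (Fin M.rank) F) (B : Matrix (Fin M.rank) (Fin n) F)
      (A' : Matrix (Fin M.rank) (Fin n) F), A * B = M ∧ A' * A = 1 := by
  classical
  have hr : Module.finrank F (LinearMap.range M.mulVecLin) = M.rank := rfl
  let b : Module.Basis (Fin M.rank) F (LinearMap.range M.mulVecLin) :=
    Module.finBasisOfFinrankEq F _ hr
  let A : Matrix (Fin n) (Fin M.rank) F := Matrix.of fun i j => (b j : Fin n → F) i
  have colMem : ∀ c : Fin n, (Mᵀ c) ∈ LinearMap.range M.mulVecLin := by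
    intro c
    refine ⟨Pi.single c 1, ?_⟩
    simp only [Matrix.mulVecLin_apply, Matrix.mulVec_single_one]
    rfl
  let B : Matrix (Fin M.rank) (Fin n) F :=
    Matrix.of fun j c => b.repr ⟨Mᵀ c, colMem c⟩ j
  have hAB : A * B = M := by
    ext i c
    have := b.sum_repr ⟨Mᵀ c, colMem c⟩
    have h2 := congrArg (fun v : (LinearMap.range M.mulVecLin) => (v : Fin n → F) i) this
    simp only [Submodule.coe_sum, Finset.sum_apply, SetLike.val_smul, Pi.smul_apply,
      smul_eq_mul] at h2
    simpa [Matrix.mul_apply, A, B, Matrix.transpose_apply, mul_comm] using h2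
  have hAinj : Function.Injective A.mulVecLin := by
    rw [← LinearMap.ker_eq_bot, LinearMap.ker_eq_bot']
    intro x hx
    have hz : ∑ j, x j • (b j) = 0 := by
      apply Subtype.ext
      simpa [Submodule.coe_sum, Matrix.mulVecLin_apply, Matrix.mulVec, dotProduct, A,
        funext_iff, mul_comm] using hx
    exact funext fun j => Fintype.linearIndependent_iff.mp b.linearIndependent x hz j
  obtain ⟨g, hg⟩ := LinearMap.exists_leftInverse_of_injective A.mulVecLin
    (LinearMap.ker_eq_bot.mpr hAinj)
  refine ⟨A, B, LinearMap.toMatrix' g, hAB, ?_⟩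
  have : (LinearMap.toMatrix' g) * (LinearMap.toMatrix' A.mulVecLin) = 1 := by
    rw [← LinearMap.toMatrix'_comp, hg, LinearMap.toMatrix'_id]
  have hA : LinearMap.toMatrix' A.mulVecLin = A := by
    ext i j
    simp [LinearMap.toMatrix'_apply, Matrix.mulVecLin_apply, Matrix.mulVec, dotProduct,
      mul_ite, Finset.sum_ite_eq', Pi.single_apply]
  rwa [hA] at this


lemma exists_fact' {n r : ℕ} (M : Matrix (Fin n) (Fin n) F) (h : M.rank = r) :
    ∃ (A : Matrix (Fin n) (Fin r) F) (B : Matrix (Fin r) (Fin n) F)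
      (A' : Matrix (Fin r) (Fin n) F), A * B = M ∧ A' * A = 1 := by
  subst h; exact exists_fact M

lemma card_GL_ge {r : ℕ} :
    (Fintype.card F)^(r*(r-1)) ≤ Nat.card (GL (Fin r) F) := by
  rw [Matrix.card_GL_field]
  have hq2 : 2 ≤ Fintype.card F := Fintype.one_lt_card
  calc (Fintype.card F)^(r*(r-1)) = ∏ _i : Fin r, (Fintype.card F)^(r-1) := by
        rw [Finset.prod_const, ← pow_mul]
        congr 1
        simp [mul_comm]
    _ ≤ _ := by
        apply Finset.prod_le_prod'
        intro i _
        have hi : (i : ℕ) < r := i.is_lt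
        have h1 : Fintype.card F ^ (i : ℕ) ≤ Fintype.card F ^ (r-1) :=
          Nat.pow_le_pow_right (by omega) (by omega)
        have h2 : Fintype.card F ^ (r-1) * 2 ≤ Fintype.card F ^ r := by
          have h3 : Fintype.card F ^ r = Fintype.card F ^ (r-1) * Fintype.card F := by
            rw [← pow_succ]
            congr 1
            omega
          rw [h3]
          exact Nat.mul_le_mul_left _ hq2
        omega

lemma card_rank_class {n r : ℕ} :
    Nat.card {M : Matrix (Fin n) (Fin n) F // M.rank = r} * (Fintype.card F)^(r*(r-1))
      ≤ (Fintype.card F)^(2*n*r) := by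
  classical
  choose A B A' hAB hA' using fun (M : {M : Matrix (Fin n) (Fin n) F // M.rank = r}) =>
    exists_fact' M.1 M.2
  set Φ : {M : Matrix (Fin n) (Fin n) F // M.rank = r} × GL (Fin r) F →
      Matrix (Fin n) (Fin r) F × Matrix (Fin r) (Fin n) F :=
    fun p => (A p.1 * (p.2 : Matrix (Fin r) (Fin r) F),
              ((p.2⁻¹ : GL (Fin r) F) : Matrix (Fin r) (Fin r) F) * B p.1) with hΦ
  have hrec : ∀ p, (Φ p).1 * (Φ p).2 = p.1.1 := by
    intro p
    simp only [hΦ]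
    calc (A p.1 * (p.2 : Matrix (Fin r) (Fin r) F)) *
          (((p.2⁻¹ : GL (Fin r) F) : Matrix (Fin r) (Fin r) F) * B p.1)
        = A p.1 * (((p.2 : Matrix (Fin r) (Fin r) F) *
            ((p.2⁻¹ : GL (Fin r) F) : Matrix (Fin r) (Fin r) F)) * B p.1) := by
          rw [Matrix.mul_assoc, Matrix.mul_assoc]
      _ = A p.1 * B p.1 := by
          rw [← Units.val_mul, mul_inv_cancel]
          simp
      _ = p.1.1 := hAB p.1
  have hinj : Function.Injective Φ := by
    intro p p' h
    have hM : p.1 = p'.1 := by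
      apply Subtype.ext
      rw [← hrec p, ← hrec p', h]
    have h1 : A p.1 * (p.2 : Matrix (Fin r) (Fin r) F)
        = A p'.1 * (p'.2 : Matrix (Fin r) (Fin r) F) := congrArg Prod.fst h
    rw [← hM] at h1
    have h2 : (p.2 : Matrix (Fin r) (Fin r) F) = (p'.2 : Matrix (Fin r) (Fin r) F) := by
      have := congrArg (fun X => A' p.1 * X) h1
      simpa [← Matrix.mul_assoc, hA' p.1] using this
    exact Prod.ext hM (Units.ext h2)
  have hcard := Nat.card_le_card_of_injective Φ hinj
  have h1 : Nat.card ({M : Matrix (Fin n) (Fin n) F // M.rank = r} × GL (Fin r) F)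
      = Nat.card {M : Matrix (Fin n) (Fin n) F // M.rank = r} * Nat.card (GL (Fin r) F) :=
    Nat.card_prod _ _
  have h2 : Nat.card (Matrix (Fin n) (Fin r) F × Matrix (Fin r) (Fin n) F)
      = (Fintype.card F)^(2*n*r) := by
    rw [Nat.card_prod]
    have e1 : Nat.card (Matrix (Fin n) (Fin r) F) = Nat.card F ^ (r * n) := by
      show Nat.card (Fin n → Fin r → F) = _
      rw [Nat.card_fun, Nat.card_fun, ← pow_mul]
      simp [Nat.card_eq_fintype_card, mul_comm]
    have e2 : Nat.card (Matrix (Fin r) (Fin n) F) = Nat.card F ^ (n * r) := by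
      show Nat.card (Fin r → Fin n → F) = _
      rw [Nat.card_fun, Nat.card_fun, ← pow_mul]
      simp [Nat.card_eq_fintype_card, mul_comm]
    rw [e1, e2, ← pow_add, Nat.card_eq_fintype_card]
    congr 1
    ring
  calc Nat.card {M : Matrix (Fin n) (Fin n) F // M.rank = r} * (Fintype.card F)^(r*(r-1))
      ≤ Nat.card {M : Matrix (Fin n) (Fin n) F // M.rank = r} * Nat.card (GL (Fin r) F) :=
        Nat.mul_le_mul_left _ card_GL_ge
    _ = _ := h1.symm
    _ ≤ _ := hcard
    _ = _ := h2


lemma rank_le_of_cols_zero {n a : ℕ} (ha : a ≤ n) (M : Matrix (Fin n) (Fin n) F)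
    (h : ∀ (i j : Fin n), a ≤ (j : ℕ) → M i j = 0) : M.rank ≤ a := by
  classical
  set E : Matrix (Fin a) (Fin n) F :=
    Matrix.of fun c j => if (c : ℕ) = (j : ℕ) then 1 else 0 with hE
  have hM : M = (M.submatrix id (Fin.castLE ha)) * E := by
    ext i j
    rw [Matrix.mul_apply]
    by_cases hj : (j : ℕ) < a
    · rw [Finset.sum_eq_single (⟨(j : ℕ), hj⟩ : Fin a)]
      · have hc : (Fin.castLE ha ⟨(j : ℕ), hj⟩) = j := Fin.ext rfl
        simp [E, hc]
      · intro c _ hc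
        have : ¬ ((c : ℕ) = (j : ℕ)) := fun hcj => hc (Fin.ext hcj)
        simp [E, this]
      · intro hc
        exact absurd (Finset.mem_univ _) hc
    · rw [h i j (by omega)]
      symm
      apply Finset.sum_eq_zero
      intro c _
      have : ¬ ((c : ℕ) = (j : ℕ)) := by omega
      simp [E, this]
  calc M.rank = ((M.submatrix id (Fin.castLE ha)) * E).rank := by rw [← hM]
    _ ≤ (M.submatrix id (Fin.castLE ha)).rank := Matrix.rank_mul_le_left _ _
    _ ≤ a := by
        have := Matrix.rank_le_card_width (M.submatrix id (Fin.castLE ha))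
        simpa using this

lemma aux_mul_pred (m : ℕ) : m * (m - 1) + m = m * m := by
  cases m with
  | zero => simp
  | succ m' => simp [Nat.succ_sub_one]; ring

lemma sq_lt_five_pow {k : ℕ} (hk : 6 ≤ k) : (k+1)*(k+1) < 5 ^ k := by
  induction k, hk using Nat.le_induction with
  | base => norm_num
  | succ m hm ih =>
    show (m+2)*(m+2) < 5^(m+1)
    have : (m+2)*(m+2) ≤ 4*((m+1)*(m+1)) := by nlinarith
    have h5 : 5^(m+1) = 5*5^m := by ring
    omega

lemma exponent_ineq {n k a b c : ℕ} (hk6 : 6 ≤ k) (hkn : k ≤ n - 1) (hn : 2 ≤ n)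
    (hs : a + b ≤ k) (hc : c = (k * (k-2))/2) :
    c ≤ a*(a-1) + b*(b-1) + 2*n*(k - (a+b)) := by
  have h2c : 2*c ≤ k*(k-2) := by omega
  have hA := aux_mul_pred a
  have hB := aux_mul_pred b
  have hK := aux_mul_pred k
  -- cast to ℤ
  have hzz : (k:ℤ)*(k-2) ≤ 2*(a:ℤ)*(a-1) + 2*(b:ℤ)*(b-1) + 4*(n:ℤ)*(k - (a+b)) := by
    have hab2 : (a:ℤ) + b ≤ k := by exact_mod_cast hs
    have hkn' : (k:ℤ) ≤ n - 1 := by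
      have : (k:ℤ) ≤ (n:ℤ) - 1 := by
        have h := hkn
        have hn1 : 1 ≤ n := by omega
        omega
      exact this
    have hn1 : (1:ℤ) ≤ (n:ℤ) := by exact_mod_cast (by omega : 1 ≤ n)
    have hs' : (0:ℤ) ≤ (k:ℤ) - ((a:ℤ)+(b:ℤ)) := by linarith
    have h4n : (0:ℤ) ≤ 4*(n:ℤ) - ((k:ℤ) + ((a:ℤ)+(b:ℤ)) - 2) := by linarith
    nlinarith [sq_nonneg ((a:ℤ) - b), mul_nonneg hs' h4n]
  -- transfer back
  have ea : ((a*(a-1) : ℕ) : ℤ) = (a:ℤ)*(a:ℤ) - a := by omega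
  have eb : ((b*(b-1) : ℕ) : ℤ) = (b:ℤ)*(b:ℤ) - b := by omega

  have e3 : ((k - (a+b) : ℕ) : ℤ) = (k:ℤ) - ((a:ℕ):ℤ) - b := by
    have : a + b ≤ k := hs
    push_cast [Nat.cast_sub this]
    ring
  have e4 : ((k*(k-2) : ℕ) : ℤ) = (k:ℤ)*((k:ℤ)-2) := by
    have h2 : 2 ≤ k := by omega
    push_cast [Nat.cast_sub h2]
    ring
  have final : (2*c : ℤ) ≤ 2*(a*(a-1) : ℕ) + 2*(b*(b-1) : ℕ) + 4*(n:ℤ)*((k - (a+b) : ℕ)) := by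
    calc (2*c : ℤ) ≤ ((k*(k-2) : ℕ) : ℤ) := by exact_mod_cast h2c
      _ = (k:ℤ)*((k:ℤ)-2) := e4
      _ ≤ 2*(a:ℤ)*(a-1) + 2*(b:ℤ)*(b-1) + 4*(n:ℤ)*((k:ℤ) - (a+b)) := hzz
      _ = 2*(a*(a-1) : ℕ) + 2*(b*(b-1) : ℕ) + 4*(n:ℤ)*((k - (a+b) : ℕ)) := by
          rw [ea, eb, e3]; ring
  have final2 : (2*c : ℤ) ≤ 2*((a*(a-1) : ℕ) : ℤ) + 2*((b*(b-1) : ℕ) : ℤ)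
      + 4*((n*(k - (a+b)) : ℕ) : ℤ) := by
    calc (2*c : ℤ) ≤ 2*(a*(a-1) : ℕ) + 2*(b*(b-1) : ℕ) + 4*(n:ℤ)*((k - (a+b) : ℕ)) := final
      _ = 2*((a*(a-1) : ℕ) : ℤ) + 2*((b*(b-1) : ℕ) : ℤ) + 4*((n*(k - (a+b)) : ℕ) : ℤ) := by
          push_cast
          ring
  have hfin : 2*c ≤ 2*(a*(a-1)) + 2*(b*(b-1)) + 4*(n*(k - (a+b))) := by exact_mod_cast final2
  have hgt : 2*n*(k - (a+b)) = 2*(n*(k - (a+b))) := by rw [mul_assoc]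
  omega

lemma ball_lt {q n k : ℕ} (hq : Fintype.card F = q) (hq5 : 5 ≤ q) (hk6 : 6 ≤ k)
    (hkn : k ≤ n - 1) (hn : 2 ≤ n) :
    Nat.card {X : Fin 2 → Matrix (Fin n) (Fin n) F // (∑ i, ((X i).rank)) ≤ k}
      < q ^ (2*n*k) := by
  classical
  obtain ⟨R, hRdef⟩ : ∃ R : ℕ → ℕ,
      R = fun a => Nat.card {M : Matrix (Fin n) (Fin n) F // M.rank = a} := ⟨_, rfl⟩
  obtain ⟨c, hcdef⟩ : ∃ c : ℕ, c = (k * (k-2))/2 := ⟨_, rfl⟩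
  obtain ⟨Bs, hBs⟩ : ∃ Bs : Finset (Fin 2 → Matrix (Fin n) (Fin n) F),
      Bs = Finset.univ.filter (fun X => (∑ i, ((X i).rank)) ≤ k) := ⟨_, rfl⟩
  obtain ⟨P, hP⟩ : ∃ P : Finset (ℕ × ℕ),
      P = ((Finset.range (k+1)) ×ˢ (Finset.range (k+1))).filter (fun p => p.1 + p.2 ≤ k) :=
    ⟨_, rfl⟩
  have hcover : Bs ⊆ P.biUnion (fun p =>
      Finset.univ.filter (fun X : Fin 2 → Matrix (Fin n) (Fin n) F => (X 0).rank = p.1 ∧ (X 1).rank = p.2)) := by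
    intro X hX
    rw [hBs, Finset.mem_filter] at hX
    have hsum : (X 0).rank + (X 1).rank ≤ k := by
      have := hX.2
      rwa [Fin.sum_univ_two] at this
    rw [Finset.mem_biUnion]
    rw [hP]
    refine ⟨((X 0).rank, (X 1).rank), ?_, ?_⟩
    · rw [Finset.mem_filter, Finset.mem_product, Finset.mem_range, Finset.mem_range]
      exact ⟨⟨by omega, by omega⟩, hsum⟩
    · simp
  have hclass : ∀ p : ℕ × ℕ,
      (Finset.univ.filter (fun X : Fin 2 → Matrix (Fin n) (Fin n) F =>
        (X 0).rank = p.1 ∧ (X 1).rank = p.2)).card ≤ R p.1 * R p.2 := by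
    intro p
    rw [← Fintype.card_subtype]
    have : R p.1 * R p.2
        = Fintype.card ({M : Matrix (Fin n) (Fin n) F // M.rank = p.1} × {M : Matrix (Fin n) (Fin n) F // M.rank = p.2}) := by
      rw [Fintype.card_prod, hRdef]
      simp [Nat.card_eq_fintype_card]
    rw [this]
    apply Fintype.card_le_of_injective
      (fun X => (⟨X.1 0, X.2.1⟩, ⟨X.1 1, X.2.2⟩))
    intro X Y h
    apply Subtype.ext
    funext i
    fin_cases i
    · exact congrArg Subtype.val (congrArg Prod.fst h)
    · exact congrArg Subtype.val (congrArg Prod.snd h)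
  have hterm : ∀ p ∈ P, R p.1 * R p.2 * q ^ c ≤ q ^ (2*n*k) := by
    intro p hp
    rw [hP, Finset.mem_filter, Finset.mem_product] at hp
    obtain ⟨⟨_, _⟩, hps⟩ := hp
    have hce : c ≤ p.1*(p.1-1) + p.2*(p.2-1) + 2*n*(k - (p.1+p.2)) :=
      exponent_ineq hk6 hkn hn hps hcdef
    have hb1 : R p.1 * q^(p.1*(p.1-1)) ≤ q^(2*n*p.1) := by
      rw [hRdef]; rw [← hq]; exact card_rank_class
    have hb2 : R p.2 * q^(p.2*(p.2-1)) ≤ q^(2*n*p.2) := by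
      rw [hRdef]; rw [← hq]; exact card_rank_class
    calc R p.1 * R p.2 * q ^ c
        ≤ R p.1 * R p.2 * q ^ (p.1*(p.1-1) + p.2*(p.2-1) + 2*n*(k - (p.1+p.2))) := by
          apply Nat.mul_le_mul_left
          exact Nat.pow_le_pow_right (by omega) hce
      _ = (R p.1 * q^(p.1*(p.1-1))) * (R p.2 * q^(p.2*(p.2-1))) * q^(2*n*(k - (p.1+p.2))) := by
          rw [pow_add, pow_add]; ring
      _ ≤ q^(2*n*p.1) * q^(2*n*p.2) * q^(2*n*(k - (p.1+p.2))) := by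
          exact Nat.mul_le_mul (Nat.mul_le_mul hb1 hb2) le_rfl
      _ = q ^ (2*n*p.1 + 2*n*p.2 + 2*n*(k - (p.1+p.2))) := by
          rw [pow_add, pow_add]
      _ = q ^ (2*n*k) := by
          congr 1
          have e1 : 2*n*(k - (p.1+p.2)) = 2*(n*(k - (p.1+p.2))) := by rw [mul_assoc]
          have e2 : n*(k - (p.1+p.2)) + n*(p.1+p.2) = n*k := by
            rw [← Nat.mul_add]
            congr 1
            omega
          have e3 : n*(p.1+p.2) = n*p.1 + n*p.2 := by ring
          have e4 : 2*n*p.1 = 2*(n*p.1) := by ring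
          have e5 : 2*n*p.2 = 2*(n*p.2) := by ring
          have e6 : 2*n*k = 2*(n*k) := by ring
          omega
  have hPcard : P.card ≤ (k+1)*(k+1) := by
    calc P.card ≤ ((Finset.range (k+1)) ×ˢ (Finset.range (k+1))).card := by
          rw [hP]; exact Finset.card_filter_le _ _
      _ = (k+1)*(k+1) := by rw [Finset.card_product, Finset.card_range]
  have hq2 : 2 ≤ q := hq ▸ Fintype.one_lt_card
  have hkc : k ≤ c := by
    rw [hcdef]
    have : 4*k ≤ k*(k-2) := by
      have h4 : 4 ≤ k - 2 := by omega
      calc 4*k = k*4 := by ring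
        _ ≤ k*(k-2) := Nat.mul_le_mul_left _ h4
    omega
  have hsq : (k+1)*(k+1) < q ^ c := by
    calc (k+1)*(k+1) < 5^k := sq_lt_five_pow hk6
      _ ≤ q^k := Nat.pow_le_pow_left hq5 k
      _ ≤ q^c := Nat.pow_le_pow_right (by omega) hkc
  have hmain : q^c * Bs.card < q^c * q^(2*n*k) := by
    calc q^c * Bs.card = Bs.card * q^c := by ring
      _ ≤ (∑ p ∈ P, (Finset.univ.filter (fun X : Fin 2 → Matrix (Fin n) (Fin n) F =>
            (X 0).rank = p.1 ∧ (X 1).rank = p.2)).card) * q^c := by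
          apply Nat.mul_le_mul_right
          exact le_trans (Finset.card_le_card hcover) (Finset.card_biUnion_le)
      _ = ∑ p ∈ P, (Finset.univ.filter (fun X : Fin 2 → Matrix (Fin n) (Fin n) F =>
            (X 0).rank = p.1 ∧ (X 1).rank = p.2)).card * q^c := by
          rw [Finset.sum_mul]
      _ ≤ ∑ p ∈ P, q ^ (2*n*k) := by
          apply Finset.sum_le_sum
          intro p hp
          exact le_trans (Nat.mul_le_mul_right _ (hclass p)) (hterm p hp)
      _ = P.card * q ^ (2*n*k) := by rw [Finset.sum_const, smul_eq_mul]
      _ ≤ ((k+1)*(k+1)) * q ^ (2*n*k) := Nat.mul_le_mul_right _ hPcard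
      _ < q^c * q ^ (2*n*k) := by
          exact mul_lt_mul_of_pos_right hsq (Nat.pow_pos (by omega))
      _ = q^c * q^(2*n*k) := by ring
  have hcard : Nat.card {X : Fin 2 → Matrix (Fin n) (Fin n) F // (∑ i, ((X i).rank)) ≤ k}
      = Bs.card := by
    rw [Nat.card_eq_fintype_card, Fintype.card_subtype, hBs]
  rw [hcard]
  exact Nat.lt_of_mul_lt_mul_left hmain

end Helpers

theorem stmt_4 (F : Type) [Field F] [Fintype F] (q n : ℕ)
    (hq : Fintype.card F = q) (hq5 : 5 ≤ q) (hn : 2 ≤ n) :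
    ¬ ∃ (C : Submodule F (Fin 2 → Matrix (Fin n) (Fin n) F)) (d : ℕ),
        IsMinDist C d ∧ IsPerfect F C d ∧ 6 ≤ (d - 1) / 2 := by
  rintro ⟨C, d, hmin, hperf, hk6⟩
  classical
  obtain ⟨x, hxC, hx0, hxw⟩ := hmin.1
  have hrk0 : (x 0).rank ≤ n := (x 0).rank_le_width
  have hrk1 : (x 1).rank ≤ n := (x 1).rank_le_width
  have hxw2 : (x 0).rank + (x 1).rank = d := by
    rw [← hxw]
    simp [sumRankW, Fin.sum_univ_two]
  have hdle : d ≤ 2 * n := by omega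
  have hd13 : 13 ≤ d := by omega
  have h2k : 2 * ((d-1)/2) ≤ d - 1 := by omega
  have hkn : (d-1)/2 ≤ n - 1 := by omega
  -- Singleton bound
  set a := min n (d - 1) with hadef
  set b := (d - 1) - a with hbdef
  have han : a ≤ n := by omega
  have hbn : b ≤ n := by omega
  have hab : a + b = d - 1 := by omega
  let f : C → Matrix (Fin n) (Fin (n - a)) F × Matrix (Fin n) (Fin (n - b)) F :=
    fun x => ((x : Fin 2 → Matrix (Fin n) (Fin n) F) 0 |>.submatrix id
                (fun j => ⟨a + (j : ℕ), by have := j.is_lt; omega⟩),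
              (x : Fin 2 → Matrix (Fin n) (Fin n) F) 1 |>.submatrix id
                (fun j => ⟨b + (j : ℕ), by have := j.is_lt; omega⟩))
  have hfinj : Function.Injective f := by
    intro y y' hf
    have hzC : (y : Fin 2 → Matrix (Fin n) (Fin n) F) - (y' : _) ∈ C :=
      sub_mem y.2 y'.2
    set z := (y : Fin 2 → Matrix (Fin n) (Fin n) F) - (y' : _) with hz
    have hz0 : ∀ (i j : Fin n), a ≤ (j : ℕ) → z 0 i j = 0 := by
      intro i j hj
      have h0 := congrArg Prod.fst hf
      have hcol : (⟨a + ((j : ℕ) - a), by have := j.is_lt; omega⟩ : Fin n) = j := by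
        apply Fin.ext; simp; omega
      have := congrFun (congrFun h0 i) ⟨(j : ℕ) - a, by have := j.is_lt; omega⟩
      simp only [Matrix.submatrix_apply, id_eq, f] at this
      rw [hcol] at this
      simp [hz, Pi.sub_apply, Matrix.sub_apply, this]
    have hz1 : ∀ (i j : Fin n), b ≤ (j : ℕ) → z 1 i j = 0 := by
      intro i j hj
      have h1 := congrArg Prod.snd hf
      have hcol : (⟨b + ((j : ℕ) - b), by have := j.is_lt; omega⟩ : Fin n) = j := by
        apply Fin.ext; simp; omega
      have := congrFun (congrFun h1 i) ⟨(j : ℕ) - b, by have := j.is_lt; omega⟩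
      simp only [Matrix.submatrix_apply, id_eq, f] at this
      rw [hcol] at this
      simp [hz, Pi.sub_apply, Matrix.sub_apply, this]
    have hzzero : z = 0 := by
      by_contra hne
      have hmem : sumRankW z ∈ {w | ∃ x ∈ C, x ≠ 0 ∧ sumRankW x = w} :=
        ⟨z, hzC, hne, rfl⟩
      have hge := hmin.2 hmem
      have hzw : sumRankW z = (z 0).rank + (z 1).rank := by
        simp [sumRankW, Fin.sum_univ_two]
      have hr0 : (z 0).rank ≤ a := rank_le_of_cols_zero han (z 0) hz0
      have hr1 : (z 1).rank ≤ b := rank_le_of_cols_zero hbn (z 1) hz1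
      omega
    have : (y : Fin 2 → Matrix (Fin n) (Fin n) F) = (y' : _) :=
      sub_eq_zero.mp hzzero
    exact Subtype.ext this
  have hfcard := Nat.card_le_card_of_injective f hfinj
  have e1 : Nat.card (Matrix (Fin n) (Fin (n - a)) F × Matrix (Fin n) (Fin (n - b)) F)
      = q ^ (n * (n - a)) * q ^ (n * (n - b)) := by
    rw [Nat.card_prod]
    have e1a : Nat.card (Matrix (Fin n) (Fin (n - a)) F) = q ^ (n * (n - a)) := by
      show Nat.card (Fin n → Fin (n - a) → F) = _
      rw [Nat.card_fun, Nat.card_fun, ← pow_mul]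
      simp [Nat.card_eq_fintype_card, hq]
      ring_nf
    have e1b : Nat.card (Matrix (Fin n) (Fin (n - b)) F) = q ^ (n * (n - b)) := by
      show Nat.card (Fin n → Fin (n - b) → F) = _
      rw [Nat.card_fun, Nat.card_fun, ← pow_mul]
      simp [Nat.card_eq_fintype_card, hq]
      ring_nf
    rw [e1a, e1b]
  have hC : Nat.card C * q ^ (n * (d - 1)) ≤ q ^ (2 * (n * n)) := by
    calc Nat.card C * q ^ (n * (d - 1))
        ≤ (q ^ (n * (n - a)) * q ^ (n * (n - b))) * q ^ (n * (d - 1)) := by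
          apply Nat.mul_le_mul_right
          rw [← e1]; exact hfcard
      _ = q ^ (n * (n - a) + n * (n - b) + n * (d - 1)) := by
          rw [← pow_add, ← pow_add]
      _ = q ^ (2 * (n * n)) := by
          congr 1
          have h1 : (n - a) + a = n := by omega
          have h2 : (n - b) + b = n := by omega
          have h3 : n * (n - a) + n * a = n * n := by
            rw [← Nat.mul_add, h1]
          have h4 : n * (n - b) + n * b = n * n := by
            rw [← Nat.mul_add, h2]
          have h5 : n * (d - 1) = n * a + n * b := by rw [← hab, Nat.mul_add]
          omega
  -- ball bound
  have hV : ballVol F 2 n n ((d - 1) / 2) < q ^ (n * (d - 1)) := by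
    have hb := ball_lt (F := F) (q := q) (n := n) (k := (d-1)/2) hq hq5 hk6 hkn hn
    have heq : ballVol F 2 n n ((d - 1) / 2)
        = Nat.card {X : Fin 2 → Matrix (Fin n) (Fin n) F //
            (∑ i, ((X i).rank)) ≤ (d - 1) / 2} := rfl
    rw [heq]
    calc Nat.card {X : Fin 2 → Matrix (Fin n) (Fin n) F //
            (∑ i, ((X i).rank)) ≤ (d - 1) / 2}
        < q ^ (2 * n * ((d - 1) / 2)) := hb
      _ ≤ q ^ (n * (d - 1)) := by
          apply Nat.pow_le_pow_right (Nat.le_trans (by norm_num) hq5)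
          calc 2 * n * ((d - 1) / 2) = n * (2 * ((d - 1) / 2)) := by ring
            _ ≤ n * (d - 1) := Nat.mul_le_mul_left _ h2k
  have hM : Nat.card (Fin 2 → Matrix (Fin n) (Fin n) F) = q ^ (2 * (n * n)) := by
    show Nat.card (Fin 2 → Fin n → Fin n → F) = _
    rw [Nat.card_fun, Nat.card_fun, Nat.card_fun, ← pow_mul, ← pow_mul]
    simp [Nat.card_eq_fintype_card, hq]
    ring_nf
  have hCpos : 0 < Nat.card C := Nat.card_pos
  have hperf' : Nat.card C * ballVol F 2 n n ((d - 1) / 2) = q ^ (2 * (n * n)) := by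
    rw [← hM]; exact hperf
  have hlt : Nat.card C * ballVol F 2 n n ((d - 1) / 2)
      < Nat.card C * q ^ (n * (d - 1)) := by
    exact mul_lt_mul_of_pos_left hV hCpos
  rw [hperf'] at hlt
  have hcontra : q ^ (2 * (n * n)) < q ^ (2 * (n * n)) := by
    calc q ^ (2 * (n * n)) < Nat.card C * q ^ (n * (d - 1)) := hlt
      _ ≤ q ^ (2 * (n * n)) := hC
  exact lt_irrefl _ hcontra
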